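/- Let E be a finite directed graph (with separation C) admitting no cycles in the separated-graph sense (no nontrivial admissible closed path α with αα admissible). Then every admissible path in (E, C) has length at most 3·|E⁰|. -/

import Mathlib

namespace SepGraphStmt

/-- A finitely separated graph: a directed graph with a colouring of the edges
such that edges of the same colour have the same range, and each colour class is finite.
(The colour classes with range `v` form the partition `C_v` of `r⁻¹(v)`.) -/
structure SepGraph (V E Λ : Type) where
  r : E → V
  s : E → V
  col : E → Λ
  col_range : ∀ e f, col e = col f → r e = r f
  col_finite : ∀ l : Λ, {e : E | col e = l}.Finite

variable {V E Λ : Type}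

/-- A letter of the double graph: an edge together with a direction
(`true` = the edge itself, `false` = its formal inverse). -/
abbrev Letter (E : Type) := E × Bool

def src (G : SepGraph V E Λ) (a : Letter E) : V :=
  if a.2 then G.s a.1 else G.r a.1

def rng (G : SepGraph V E Λ) (a : Letter E) : V :=
  if a.2 then G.r a.1 else G.s a.1

/-- Letter `b` may follow letter `a` in an admissible path
(words are written in application order: the first letter of a list is traversed first). -/
def ok (G : SepGraph V E Λ) (a b : Letter E) : Prop :=
  src G b = rng G a ∧
    (a.2 = false → b.2 = true → b.1 ≠ a.1) ∧
    (a.2 = true → b.2 = false → G.col b.1 ≠ G.col a.1)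

def Admissible (G : SepGraph V E Λ) (w : List (Letter E)) : Prop :=
  List.Chain' (ok G) w

/-- Formal inverse of a word. -/
def wInv (w : List (Letter E)) : List (Letter E) :=
  (w.map fun a => (a.1, !a.2)).reverse

/-- The source of the (nonempty) word is `v`. -/
def headIs (G : SepGraph V E Λ) (w : List (Letter E)) (v : V) : Prop :=
  ∀ a ∈ w.head?, src G a = v

/-- The range of the (nonempty) word is `v`. -/
def lastIs (G : SepGraph V E Λ) (w : List (Letter E)) (v : V) : Prop :=
  ∀ a ∈ w.getLast?, rng G a = v

/-- `w` is an admissible path from `u` to `v`. -/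
def IsPath (G : SepGraph V E Λ) (w : List (Letter E)) (u v : V) : Prop :=
  Admissible G w ∧ (w = [] → u = v) ∧ headIs G w u ∧ lastIs G w v

/-- `w` is a closed path based at `v`. -/
def IsClosed (G : SepGraph V E Λ) (w : List (Letter E)) (v : V) : Prop :=
  w ≠ [] ∧ Admissible G w ∧ headIs G w v ∧ lastIs G w v

/-- `w` is a cycle: a nontrivial path whose square is admissible. -/
def IsCycle (G : SepGraph V E Λ) (w : List (Letter E)) : Prop :=
  w ≠ [] ∧ Admissible G (w ++ w)

/-- `w` is a cycle based at `v`. -/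
def CycleAt (G : SepGraph V E Λ) (w : List (Letter E)) (v : V) : Prop :=
  IsCycle G w ∧ headIs G w v

/-- A nontrivial admissible path `w` allows a return: some `βw` is a closed path. -/
def AllowsReturn (G : SepGraph V E Λ) (w : List (Letter E)) : Prop :=
  w ≠ [] ∧ Admissible G w ∧ ∃ b u, IsClosed G (w ++ b) u

/-- A "returning item" at `v`: either an edge in `s⁻¹(v)` allowing a return,
or a colour class `X ∈ C_v` allowing a return. -/
def RetItem (G : SepGraph V E Λ) (v : V) : E ⊕ Λ → Prop
  | Sum.inl e => G.s e = v ∧ AllowsReturn G [(e, true)]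
  | Sum.inr l => ∃ e, G.col e = l ∧ G.r e = v ∧ AllowsReturn G [(e, false)]

/-- `v` is a branching vertex. -/
def Branching (G : SepGraph V E Λ) (v : V) : Prop :=
  ∃ x y z : E ⊕ Λ, x ≠ y ∧ x ≠ z ∧ y ≠ z ∧
    RetItem G v x ∧ RetItem G v y ∧ RetItem G v z

/-- The relation `u ⊸ v`: there is an admissible path `α : u → v` and a cycle `β`
based at `v` such that `α⁻¹βα` is admissible. -/
def Multimap (G : SepGraph V E Λ) (u v : V) : Prop :=
  ∃ α β, IsPath G α u v ∧ CycleAt G β v ∧ Admissible G (α ++ β ++ wInv α)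

/-- A word is positively oriented w.r.t. an orientation `o`. -/
def Pos (o : E → Bool) (w : List (Letter E)) : Prop := ∀ a ∈ w, a.2 = o a.1

/-- A word is negatively oriented w.r.t. an orientation `o`. -/
def Neg (o : E → Bool) (w : List (Letter E)) : Prop := ∀ a ∈ w, a.2 = !o a.1

/-- `o` is an orientation at `v` (Definition of orientation, with (2')). -/
def OrientAt (G : SepGraph V E Λ) (o : E → Bool) (v : V) : Prop :=
  ((∃ l : Λ, (∃ e, G.col e = l) ∧ (∀ e, (G.r e = v ∧ o e = false) ↔ G.col e = l)) ∧
    ∀ e, G.s e = v → o e = false) ∨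
  ((∀ e, G.r e = v → o e = true) ∧
    ∀ e f, G.s e = v → G.s f = v → o e = true → o f = true → e = f)

/-- `o` is a proper orientation at `v`. -/
def ProperOrientAt (G : SepGraph V E Λ) (o : E → Bool) (v : V) : Prop :=
  ((∃ l : Λ, (∃ e, G.col e = l) ∧ (∀ e, (G.r e = v ∧ o e = false) ↔ G.col e = l)) ∧
    ∀ e, G.s e = v → o e = false) ∨
  ((∀ e, G.r e = v → o e = true) ∧ ∃! e, G.s e = v ∧ o e = true)

/-- `w` is a base-simple closed path at `v`. -/
def BaseSimple (G : SepGraph V E Λ) (w : List (Letter E)) (v : V) : Prop :=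
  IsClosed G w v ∧
    ∀ p, p ≠ [] → p.length < w.length → p <+: w → ¬ lastIs G p v


/-- Type key of a letter arriving at its range. -/
def tkey (G : SepGraph V E Λ) (a : Letter E) : E ⊕ Λ :=
  if a.2 then Sum.inr (G.col a.1) else Sum.inl a.1

/-- Type key of a letter leaving from its source. -/
def skey (G : SepGraph V E Λ) (a : Letter E) : E ⊕ Λ :=
  if a.2 then Sum.inl a.1 else Sum.inr (G.col a.1)

lemma ok_iff_key (G : SepGraph V E Λ) (a b : Letter E) (h : src G b = rng G a) :
    ok G a b ↔ tkey G a ≠ skey G b := by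
  obtain ⟨e, d⟩ := a; obtain ⟨f, d'⟩ := b
  cases d <;> cases d' <;>
    simp [ok, tkey, skey, h, eq_comm, ne_comm]

/-- From two closed paths at the same vertex whose concatenation is admissible,
we can produce a cycle. -/
lemma cycle_of_two_loops {G : SepGraph V E Λ} {p q : List (Letter E)} {v : V}
    (hp : IsClosed G p v) (hq : IsClosed G q v) (hpq : Admissible G (p ++ q)) :
    ∃ w, IsCycle G w := by
  obtain ⟨hp0, hpA, hpH, hpL⟩ := hp
  obtain ⟨hq0, hqA, hqH, hqL⟩ := hq
  set a := p.getLast hp0 with ha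
  set b := p.head hp0 with hb
  set c := q.getLast hq0 with hc
  set d := q.head hq0 with hd
  have hpl : p.getLast? = some a := List.getLast?_eq_getLast hp0
  have hph : p.head? = some b := List.head?_eq_head hp0
  have hql : q.getLast? = some c := List.getLast?_eq_getLast hq0
  have hqh : q.head? = some d := List.head?_eq_head hq0
  have hrb : src G b = v := hpH b (by rw [hph]; rfl)
  have hra : rng G a = v := hpL a (by rw [hpl]; rfl)
  have hrd : src G d = v := hqH d (by rw [hqh]; rfl)
  have hrc : rng G c = v := hqL c (by rw [hql]; rfl)
  have had : ok G a d := by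
    have := (List.isChain_append.1 hpq).2.2
    exact this a (by rw [hpl]; rfl) d (by rw [hqh]; rfl)
  by_cases hab : ok G a b
  · exact ⟨p, hp0, List.IsChain.append hpA hpA (by
      intro x hx y hy
      rw [hpl] at hx; rw [hph] at hy
      simp only [Option.mem_def, Option.some.injEq] at hx hy
      subst hx; subst hy; exact hab)⟩
  by_cases hcd : ok G c d
  · exact ⟨q, hq0, List.IsChain.append hqA hqA (by
      intro x hx y hy
      rw [hql] at hx; rw [hqh] at hy
      simp only [Option.mem_def, Option.some.injEq] at hx hy
      subst hx; subst hy; exact hcd)⟩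
  by_cases hcb : ok G c b
  · refine ⟨q ++ p, by simp [hq0], ?_⟩
    have hqp : Admissible G (q ++ p) := List.IsChain.append hqA hpA (by
      intro x hx y hy
      rw [hql] at hx; rw [hph] at hy
      simp only [Option.mem_def, Option.some.injEq] at hx hy
      subst hx; subst hy; exact hcb)
    exact List.IsChain.append hqp hqp (by
      intro x hx y hy
      rw [List.getLast?_append_of_ne_nil _ hp0, hpl] at hx
      rw [List.head?_append_of_ne_nil _ hq0, hqh] at hy
      simp only [Option.mem_def, Option.some.injEq] at hx hy
      subst hx; subst hy; exact had)
  · exfalso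
    have e1 : tkey G a = skey G b := by
      by_contra h; exact hab ((ok_iff_key G a b (by rw [hrb, hra])).2 h)
    have e2 : tkey G c = skey G d := by
      by_contra h; exact hcd ((ok_iff_key G c d (by rw [hrd, hrc])).2 h)
    have e3 : tkey G c = skey G b := by
      by_contra h; exact hcb ((ok_iff_key G c b (by rw [hrb, hrc])).2 h)
    have e4 : tkey G a ≠ skey G d :=
      (ok_iff_key G a d (by rw [hrd, hra])).1 had
    exact e4 (e1.trans (e3.symm.trans e2))

/-- A segment of an admissible word between two visits of `v` is a closed path at `v`. -/
lemma seg_closed {G : SepGraph V E Λ} {w : List (Letter E)} (hw : Admissible G w)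
    {v : V} {i j : ℕ} (hij : i < j) (hj : j < w.length)
    (hi' : src G (w[i]'(lt_trans hij hj)) = v) (hj' : src G (w[j]'hj) = v) :
    IsClosed G ((w.drop i).take (j - i)) v := by
  set p := (w.drop i).take (j - i) with hp
  have hplen : p.length = j - i := by
    simp only [hp, List.length_take, List.length_drop]
    omega
  have hp0 : p ≠ [] := by
    intro h
    rw [h] at hplen
    simp at hplen; omega
  have hhead : p.head? = some (w[i]'(lt_trans hij hj)) := by
    rw [List.head?_eq_getElem?, hp, List.getElem?_take_of_lt (by omega), List.getElem?_drop,
      Nat.add_zero, List.getElem?_eq_getElem (lt_trans hij hj)]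
  have hlast : p.getLast? = some (w[j-1]'(by omega)) := by
    rw [List.getLast?_eq_getElem?, hplen, hp, List.getElem?_take_of_lt (by omega),
      List.getElem?_drop]
    have : i + (j - i - 1) = j - 1 := by omega
    rw [this, List.getElem?_eq_getElem (by omega)]
  have hadj : ok G (w[j-1]'(by omega)) (w[j]'hj) := by
    have h1 : j - 1 + 1 < w.length := by omega
    have := List.isChain_iff_getElem.1 hw (j-1) h1
    simpa only [List.get_eq_getElem, Nat.sub_add_cancel (by omega : 1 ≤ j)] using this
  refine ⟨hp0, hw.infix ((List.take_prefix _ _).isInfix.trans (List.drop_suffix _ _).isInfix), ?_, ?_⟩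
  · intro x hx
    rw [hhead] at hx
    simp only [Option.mem_def, Option.some.injEq] at hx
    subst hx; exact hi'
  · intro x hx
    rw [hlast] at hx
    simp only [Option.mem_def, Option.some.injEq] at hx
    subst hx
    rw [hadj.1] at hj'; exact hj'

lemma sorted3 (P : ℕ → Prop) {a b c : ℕ} (ha : P a) (hb : P b) (hc : P c)
    (hab : a ≠ b) (hac : a ≠ c) (hbc : b ≠ c) :
    ∃ i j k, i < j ∧ j < k ∧ P i ∧ P j ∧ P k := by
  rcases Nat.lt_trichotomy a b with h1 | h1 | h1
  · rcases Nat.lt_trichotomy b c with h2 | h2 | h2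
    · exact ⟨a, b, c, h1, h2, ha, hb, hc⟩
    · exact absurd h2 hbc
    · rcases Nat.lt_trichotomy a c with h3 | h3 | h3
      · exact ⟨a, c, b, h3, h2, ha, hc, hb⟩
      · exact absurd h3 hac
      · exact ⟨c, a, b, h3, h1, hc, ha, hb⟩
  · exact absurd h1 hab
  · rcases Nat.lt_trichotomy a c with h2 | h2 | h2
    · exact ⟨b, a, c, h1, h2, hb, ha, hc⟩
    · exact absurd h2 hac
    · rcases Nat.lt_trichotomy b c with h3 | h3 | h3
      · exact ⟨b, c, a, h3, h2, hb, hc, ha⟩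
      · exact absurd h3 hbc
      · exact ⟨c, b, a, h3, h1, hc, hb, ha⟩

/-- In a finite separated graph admitting no cycles, every admissible
path has length at most `3 * |E⁰|`. -/
theorem stmt16 {V E Λ : Type} [Fintype V] [Fintype E] (G : SepGraph V E Λ)
    (hnc : ∀ w : List (Letter E), ¬ IsCycle G w) :
    ∀ w : List (Letter E), Admissible G w → w.length ≤ 3 * Fintype.card V := by
  classical
  intro w hw
  by_contra hlen
  push_neg at hlen
  set n := Fintype.card V with hn
  have hlen' : 2 * n + 1 ≤ w.length := by omega
  set f : Fin (2 * n + 1) → V := fun m => src G (w[(m : ℕ)]'(by omega)) with hf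
  obtain ⟨v, hv⟩ := Fintype.exists_lt_card_fiber_of_mul_lt_card (f := f) (n := 2)
    (by simp [hn]; omega)
  rw [Finset.two_lt_card_iff] at hv
  obtain ⟨x, y, z, hx, hy, hz, hxy, hxz, hyz⟩ := hv
  simp only [Finset.mem_filter, Finset.mem_univ, true_and] at hx hy hz
  have key : ∀ m : Fin (2 * n + 1), f m = v →
      (∃ h : (m : ℕ) < w.length, src G (w[(m : ℕ)]'h) = v) :=
    fun m hm => ⟨by omega, hm⟩
  obtain ⟨i, j, k, hij, hjk, hi, hj, hk⟩ :=
    sorted3 (fun m => ∃ h : m < w.length, src G (w[m]'h) = v)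
      (key x hx) (key y hy) (key z hz)
      (fun h => hxy (Fin.ext h)) (fun h => hxz (Fin.ext h)) (fun h => hyz (Fin.ext h))
  obtain ⟨hiw, hiv⟩ := hi
  obtain ⟨hjw, hjv⟩ := hj
  obtain ⟨hkw, hkv⟩ := hk
  have hp := seg_closed hw hij hjw hiv hjv
  have hq := seg_closed hw hjk hkw hjv hkv
  obtain ⟨u, hu⟩ := cycle_of_two_loops hp hq (by
    refine List.IsChain.append hp.2.1 hq.2.1 ?_
    intro a ha b hb
    -- a is the last letter of p, b is the first letter of q
    have hplen : ((w.drop i).take (j - i)).length = j - i := by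
      simp only [List.length_take, List.length_drop]; omega
    have hlast : ((w.drop i).take (j - i)).getLast? = some (w[j-1]'(by omega)) := by
      rw [List.getLast?_eq_getElem?, hplen, List.getElem?_take_of_lt (by omega), List.getElem?_drop]
      have : i + (j - i - 1) = j - 1 := by omega
      rw [this, List.getElem?_eq_getElem (by omega)]
    have hhead : ((w.drop j).take (k - j)).head? = some (w[j]'hjw) := by
      rw [List.head?_eq_getElem?, List.getElem?_take_of_lt (by omega), List.getElem?_drop,
        Nat.add_zero, List.getElem?_eq_getElem hjw]
    rw [hlast] at ha; rw [hhead] at hb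
    simp only [Option.mem_def, Option.some.injEq] at ha hb
    subst ha; subst hb
    have h1 : j - 1 + 1 < w.length := by omega
    have := List.isChain_iff_getElem.1 hw (j-1) h1
    simpa only [List.get_eq_getElem, Nat.sub_add_cancel (by omega : 1 ≤ j)] using this
  )
  exact hnc u hu
end SepGraphStmt
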